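/- Let G be a group, u : G → ℝ a homomorphism, and x, y ∈ ℤ[G]_u with x ≠ 0. Suppose that for every α ∈ ℤ[G]_u the u-minimal part of x divides (in ℤ[ker u], modulo multiplication by elements of G) the u-minimal part of y − αx whenever y − αx ≠ 0. Then x divides y in ℤ[G]_u, i.e. there exists α ∈ ℤ[G]_u with y = αx. -/

import Mathlib

open scoped Classical

/-- The Novikov condition defining `ℤ[G]_u`. -/
def NovCond {G : Type*} [Group G] (u : G → ℝ) (f : G → ℤ) : Prop :=
  ∀ C : ℝ, {g : G | f g ≠ 0 ∧ u g ≤ C}.Finite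

/-- Convolution product of formal series on `G`. -/
noncomputable def conv {G : Type*} [Group G] (f g : G → ℤ) : G → ℤ :=
  fun k => ∑ᶠ p : G × G, if p.1 * p.2 = k then f p.1 * g p.2 else 0

/-- The minimal value of `u` on the support of a series. -/
noncomputable def minLevel {G : Type*} [Group G] (u : G → ℝ) (f : G → ℤ) : ℝ :=
  sInf (u '' Function.support f)

/-- The `u`-minimal part `m̃_u(f)`: the part of `f` supported on the elements of
`supp f` where `u` is minimal. -/
noncomputable def minPart {G : Type*} [Group G] (u : G → ℝ) (f : G → ℤ) : G → ℤ :=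
  fun g => if u g = minLevel u f then f g else 0

section Aux
variable {G : Type*} [Group G] {u : G → ℝ}

lemma nov_of_finite {f : G → ℤ} (h : (Function.support f).Finite) : NovCond u f :=
  fun C => h.subset (fun g hg => hg.1)

lemma nov_sub {f g : G → ℤ} (hf : NovCond u f) (hg : NovCond u g) :
    NovCond u (fun k => f k - g k) := by
  intro C
  apply ((hf C).union (hg C)).subset
  rintro k ⟨hk, hkC⟩
  by_cases h : f k ≠ 0
  · exact Or.inl ⟨h, hkC⟩
  · push_neg at h
    refine Or.inr ⟨?_, hkC⟩
    intro h0; apply hk; simp [h, h0]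

/-- minimum attained -/
lemma exists_min {f : G → ℤ} (hf : NovCond u f) (h0 : f ≠ 0) :
    ∃ g₀, f g₀ ≠ 0 ∧ u g₀ = minLevel u f ∧ ∀ g, f g ≠ 0 → minLevel u f ≤ u g := by
  have hne : (Function.support f).Nonempty := Function.support_nonempty_iff.mpr h0
  obtain ⟨c, hc⟩ := hne
  have hfin : {g : G | f g ≠ 0 ∧ u g ≤ u c}.Finite := hf (u c)
  have hne' : {g : G | f g ≠ 0 ∧ u g ≤ u c}.Nonempty := ⟨c, hc, le_refl _⟩
  obtain ⟨g₀, hg₀, hmin⟩ := hfin.exists_minimalFor u _ hne'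
  have hlb : ∀ g, f g ≠ 0 → u g₀ ≤ u g := by
    intro g hg
    by_cases hle : u g ≤ u c
    · by_contra hlt
      push_neg at hlt
      have := hmin (j := g) ⟨hg, hle⟩ hlt.le
      linarith
    · push_neg at hle
      linarith [hg₀.2]
  have hmem : u g₀ ∈ u '' Function.support f := ⟨g₀, hg₀.1, rfl⟩
  have heq : minLevel u f = u g₀ := by
    apply le_antisymm
    · exact csInf_le ⟨u g₀, by rintro t ⟨g, hg, rfl⟩; exact hlb g hg⟩ hmem
    · apply le_csInf ⟨u g₀, hmem⟩
      rintro t ⟨g, hg, rfl⟩; exact hlb g hg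
  exact ⟨g₀, hg₀.1, heq.symm, fun g hg => heq ▸ hlb g hg⟩

lemma minLevel_le {f : G → ℤ} (hf : NovCond u f) (h0 : f ≠ 0) {g : G} (hg : f g ≠ 0) :
    minLevel u f ≤ u g := (exists_min hf h0).choose_spec.2.2 g hg


/-- set of contributing pairs -/
def convSet (f g : G → ℤ) (k : G) : Set (G × G) :=
  {p | p.1 * p.2 = k ∧ f p.1 ≠ 0 ∧ g p.2 ≠ 0}

lemma support_subset_convSet (f g : G → ℤ) (k : G) :
    (Function.support fun p : G × G => if p.1 * p.2 = k then f p.1 * g p.2 else 0) ⊆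
      convSet f g k := by
  rintro ⟨p1, p2⟩ hp
  simp only [Function.mem_support] at hp
  by_cases h : p1 * p2 = k
  · rw [if_pos h] at hp
    exact ⟨h, fun h1 => hp (by simp [h1]), fun h2 => hp (by simp [h2])⟩
  · rw [if_neg h] at hp; exact absurd rfl hp

lemma conv_eq_sum {f g : G → ℤ} {k : G} {s : Finset (G × G)}
    (h : convSet f g k ⊆ s) :
    conv f g k = ∑ p ∈ s, if p.1 * p.2 = k then f p.1 * g p.2 else 0 := by
  exact finsum_eq_sum_of_support_subset _ ((support_subset_convSet f g k).trans h)

lemma conv_eq_zero {f g : G → ℤ} {k : G}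
    (h : ∀ p : G × G, p.1 * p.2 = k → f p.1 * g p.2 = 0) : conv f g k = 0 := by
  have : (fun p : G × G => if p.1 * p.2 = k then f p.1 * g p.2 else 0) = fun _ => 0 := by
    funext p
    by_cases hp : p.1 * p.2 = k
    · rw [if_pos hp]; exact h p hp
    · rw [if_neg hp]
  rw [conv, this, finsum_zero]

lemma conv_ne_zero {f g : G → ℤ} {k : G} (h : conv f g k ≠ 0) :
    ∃ p : G × G, p.1 * p.2 = k ∧ f p.1 ≠ 0 ∧ g p.2 ≠ 0 := by
  by_contra hc
  push_neg at hc
  apply h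
  apply conv_eq_zero
  intro p hp
  by_cases h1 : f p.1 = 0
  · simp [h1]
  · by_cases h2 : g p.2 = 0
    · simp [h2]
    · simp [hc p hp h1]

lemma convSet_finite_left {f : G → ℤ} (hf : (Function.support f).Finite) (g : G → ℤ) (k : G) :
    (convSet f g k).Finite := by
  apply (hf.image (fun a => (a, a⁻¹ * k))).subset
  rintro ⟨p1, p2⟩ ⟨hpk, h1, h2⟩
  exact ⟨p1, h1, by simp [← hpk]⟩

lemma convSet_finite_nov (hu : ∀ a b : G, u (a * b) = u a + u b)
    {f g : G → ℤ} (hf : NovCond u f) (hg : NovCond u g) (k : G) :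
    (convSet f g k).Finite := by
  by_cases hg0 : g = 0
  · have : convSet f g k = ∅ := by
      ext p; simp [convSet, hg0]
    rw [this]; exact Set.finite_empty
  · obtain ⟨g₀, hg₀, hlev, hmin⟩ := exists_min hg hg0
    apply ((hf (u k - minLevel u g)).image (fun a => (a, a⁻¹ * k))).subset
    rintro ⟨p1, p2⟩ ⟨hpk, h1, h2⟩
    refine ⟨p1, ⟨h1, ?_⟩, by simp [← hpk]⟩
    have := hu p1 p2
    rw [hpk] at this
    have := hmin p2 h2
    linarith

lemma conv_add_left {f₁ f₂ g : G → ℤ} {k : G}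
    (h1 : (convSet f₁ g k).Finite) (h2 : (convSet f₂ g k).Finite) :
    conv (fun a => f₁ a + f₂ a) g k = conv f₁ g k + conv f₂ g k := by
  have hsub : convSet (fun a => f₁ a + f₂ a) g k ⊆ (h1.union h2).toFinset := by
    rintro ⟨p1, p2⟩ ⟨hpk, hp1, hp2⟩
    rw [Set.Finite.coe_toFinset]
    by_cases h : f₁ p1 = 0
    · exact Or.inr ⟨hpk, by intro hc; apply hp1; simp [h, hc], hp2⟩
    · exact Or.inl ⟨hpk, h, hp2⟩
  rw [conv_eq_sum hsub,
    conv_eq_sum (s := (h1.union h2).toFinset) (by rw [Set.Finite.coe_toFinset]; exact fun p hp => Or.inl hp),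
    conv_eq_sum (s := (h1.union h2).toFinset) (by rw [Set.Finite.coe_toFinset]; exact fun p hp => Or.inr hp),
    ← Finset.sum_add_distrib]
  apply Finset.sum_congr rfl
  intro p _
  by_cases hp : p.1 * p.2 = k <;> simp [hp, add_mul]

lemma conv_add_right {f g₁ g₂ : G → ℤ} {k : G}
    (h1 : (convSet f g₁ k).Finite) (h2 : (convSet f g₂ k).Finite) :
    conv f (fun a => g₁ a + g₂ a) k = conv f g₁ k + conv f g₂ k := by
  have hsub : convSet f (fun a => g₁ a + g₂ a) k ⊆ (h1.union h2).toFinset := by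
    rintro ⟨p1, p2⟩ ⟨hpk, hp1, hp2⟩
    rw [Set.Finite.coe_toFinset]
    by_cases h : g₁ p2 = 0
    · exact Or.inr ⟨hpk, hp1, by intro hc; apply hp2; simp [h, hc]⟩
    · exact Or.inl ⟨hpk, hp1, h⟩
  rw [conv_eq_sum hsub,
    conv_eq_sum (s := (h1.union h2).toFinset) (by rw [Set.Finite.coe_toFinset]; exact fun p hp => Or.inl hp),
    conv_eq_sum (s := (h1.union h2).toFinset) (by rw [Set.Finite.coe_toFinset]; exact fun p hp => Or.inr hp),
    ← Finset.sum_add_distrib]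
  apply Finset.sum_congr rfl
  intro p _
  by_cases hp : p.1 * p.2 = k <;> simp [hp, mul_add]

lemma conv_zero_left (g : G → ℤ) : conv (fun _ : G => (0:ℤ)) g = fun _ => 0 := by
  funext k
  exact conv_eq_zero (fun p _ => by simp)

lemma nov_conv (hu : ∀ a b : G, u (a * b) = u a + u b)
    {f g : G → ℤ} (hf : NovCond u f) (hg : NovCond u g) : NovCond u (conv f g) := by
  by_cases hf0 : f = 0
  · intro C
    apply Set.Finite.subset (Set.finite_empty)
    rintro k ⟨hk, -⟩
    obtain ⟨p, -, h1, -⟩ := conv_ne_zero hk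
    exact absurd (by rw [hf0]; rfl) h1
  by_cases hg0 : g = 0
  · intro C
    apply Set.Finite.subset (Set.finite_empty)
    rintro k ⟨hk, -⟩
    obtain ⟨p, -, -, h2⟩ := conv_ne_zero hk
    exact absurd (by rw [hg0]; rfl) h2
  obtain ⟨f₀, hf₀, hflev, hfmin⟩ := exists_min hf hf0
  obtain ⟨g₀, hg₀, hglev, hgmin⟩ := exists_min hg hg0
  intro C
  apply (((hf (C - minLevel u g)).prod (hg (C - minLevel u f))).image
    (fun p : G × G => p.1 * p.2)).subset
  rintro k ⟨hk, hkC⟩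
  obtain ⟨⟨p1, p2⟩, hpk, h1, h2⟩ := conv_ne_zero hk
  have huk : u p1 + u p2 = u k := by rw [← hu, hpk]
  have m1 := hfmin p1 h1
  have m2 := hgmin p2 h2
  exact ⟨⟨p1, p2⟩, ⟨⟨h1, by linarith⟩, ⟨h2, by linarith⟩⟩, hpk⟩

end Aux

section Sums

/-- sums of exactly `n` elements of `L` -/
def SumsE (L : Set ℝ) : ℕ → Set ℝ
  | 0 => {0}
  | n + 1 => {t | ∃ a ∈ L, ∃ s ∈ SumsE L n, t = a + s}

lemma mem_SumsE_of_closure {L : Set ℝ} {t : ℝ} (h : t ∈ AddSubmonoid.closure L) :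
    ∃ n, t ∈ SumsE L n := by
  refine AddSubmonoid.closure_induction (motive := fun t _ => ∃ n, t ∈ SumsE L n)
    (fun a ha => ⟨1, a, ha, 0, rfl, (add_zero a).symm⟩) ⟨0, rfl⟩ ?_ h
  rintro a b - - ⟨n, hn⟩ ⟨m, hm⟩
  refine ⟨n + m, ?_⟩
  clear h
  induction n generalizing a with
  | zero => simpa [SumsE, show a = 0 from hn] using hm
  | succ k ih =>
      obtain ⟨c, hc, s, hs, rfl⟩ := hn
      have hkm : k + 1 + m = (k + m) + 1 := by omega
      rw [hkm]
      exact ⟨c, hc, s + b, ih s hs, add_assoc c s b⟩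

lemma SumsE_lb {L : Set ℝ} {δ : ℝ} (hL : ∀ a ∈ L, δ ≤ a) :
    ∀ n, ∀ t ∈ SumsE L n, (n : ℝ) * δ ≤ t := by
  intro n
  induction n with
  | zero => rintro t rfl; simp
  | succ k ih =>
      rintro t ⟨a, ha, s, hs, rfl⟩
      have := ih s hs
      have := hL a ha
      push_cast
      linarith

lemma SumsE_trunc {L : Set ℝ} (hL : ∀ a ∈ L, 0 ≤ a) {C : ℝ} :
    ∀ n, ∀ t ∈ SumsE L n, t ≤ C → t ∈ SumsE (L ∩ Set.Iic C) n := by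
  intro n
  induction n with
  | zero => rintro t rfl _; rfl
  | succ k ih =>
      rintro t ⟨a, ha, s, hs, rfl⟩ htC
      have hs0 : (0:ℝ) ≤ s := by
        have := SumsE_lb hL k s hs
        simpa using this
      have ha0 := hL a ha
      exact ⟨a, ⟨ha, by simp only [Set.mem_Iic]; linarith⟩, s,
        ih s hs (by linarith), rfl⟩

lemma SumsE_finite {L : Set ℝ} (hL : L.Finite) : ∀ n, (SumsE L n).Finite := by
  intro n
  induction n with
  | zero => exact Set.finite_singleton 0
  | succ k ih =>
      apply (hL.image2 (· + ·) ih).subset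
      rintro t ⟨a, ha, s, hs, rfl⟩
      exact Set.mem_image2_of_mem ha hs

lemma closure_inter_finite {L : Set ℝ} {δ : ℝ} (hδ : 0 < δ) (hL : ∀ a ∈ L, δ ≤ a)
    (hfin : ∀ C : ℝ, (L ∩ Set.Iic C).Finite) (C : ℝ) :
    ((AddSubmonoid.closure L : Set ℝ) ∩ Set.Iic C).Finite := by
  have h0 : ∀ a ∈ L, (0:ℝ) ≤ a := fun a ha => le_trans hδ.le (hL a ha)
  apply Set.Finite.subset
    (Set.Finite.biUnion (Set.finite_Iic (Nat.floor (C / δ)))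
      (fun n _ => SumsE_finite (hfin C) n))
  rintro t ⟨ht, htC⟩
  simp only [Set.mem_Iic] at htC
  obtain ⟨n, hn⟩ := mem_SumsE_of_closure ht
  have hlb := SumsE_lb hL n t hn
  have hnle : (n : ℝ) ≤ C / δ := by
    rw [le_div_iff₀ hδ]
    linarith
  have hnN : n ≤ Nat.floor (C / δ) := Nat.le_floor hnle
  exact Set.mem_biUnion (Set.mem_Iic.mpr hnN) (SumsE_trunc h0 n t hn htC)

end Sums

section Main
variable {G : Type*} [Group G] (u : G → ℝ) (x y : G → ℤ)

noncomputable def Rem (a : G → ℤ) : G → ℤ := fun g => y g - conv a x g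

variable (hdiv : ∀ α : G → ℤ, NovCond u α → (fun g => y g - conv α x g) ≠ 0 →
      ∃ β : G → ℤ, (Function.support β).Finite ∧
        minPart u (fun g => y g - conv α x g) = conv β (minPart u x))

noncomputable def step (a : G → ℤ) : G → ℤ :=
  if h : (Function.support a).Finite ∧ Rem x y a ≠ 0 then
    fun g => a g + (if u g = minLevel u (Rem x y a) - minLevel u x then
      (hdiv a (nov_of_finite h.1) h.2).choose g else 0)
  else a

noncomputable def iter : ℕ → (G → ℤ)
  | 0 => fun _ => 0
  | n + 1 => step u x y hdiv (iter n)

lemma step_spec (hu : ∀ a b : G, u (a * b) = u a + u b)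
    (hx : NovCond u x) (hy : NovCond u y)
    {a : G → ℤ} (ha : (Function.support a).Finite) (hr : Rem x y a ≠ 0) :
    (∀ g, step u x y hdiv a g ≠ a g → u g = minLevel u (Rem x y a) - minLevel u x) ∧
    (Function.support (step u x y hdiv a)).Finite ∧
    (∀ g, Rem x y (step u x y hdiv a) g ≠ 0 →
      (Rem x y a g ≠ 0 ∧ u g ≠ minLevel u (Rem x y a)) ∨
      ∃ p : G × G, p.1 * p.2 = g ∧ u p.1 = minLevel u (Rem x y a) - minLevel u x ∧
        x p.2 ≠ 0 ∧ u p.2 ≠ minLevel u x) := by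
  classical
  set r := Rem x y a with hrdef
  set m := minLevel u r with hmdef
  set mx := minPart u x with hmxdef
  set l := minLevel u x with hldef
  obtain ⟨hβfin, hβeq⟩ := (hdiv a (nov_of_finite ha) hr).choose_spec
  set β := (hdiv a (nov_of_finite ha) hr).choose with hβdef
  set β' : G → ℤ := fun g => if u g = m - l then β g else 0 with hβ'def
  have hβ'fin : (Function.support β').Finite := by
    apply hβfin.subset
    intro g hg
    simp only [hβ'def, Function.mem_support] at hg
    by_cases h : u g = m - l
    · rw [if_pos h] at hg; exact hg
    · rw [if_neg h] at hg; exact absurd rfl hg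
  have hβ'supp : ∀ g, β' g ≠ 0 → u g = m - l := by
    intro g hg
    by_contra h
    simp only [hβ'def, if_neg h] at hg
    exact hg rfl
  have hstep : step u x y hdiv a = fun g => a g + β' g := by
    rw [step, dif_pos ⟨ha, hr⟩]
  have hmx_supp : ∀ g, mx g ≠ 0 → u g = l := by
    intro g hg
    by_contra h
    simp only [hmxdef, minPart, ← hldef, if_neg h] at hg
    exact hg rfl
  -- conv β' mx = minPart u r
  have hkey : ∀ k, conv β' mx k = minPart u r k := by
    intro k
    by_cases hk : u k = m
    · have : conv β' mx k = conv β mx k := by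
        rw [conv, conv]
        apply finsum_congr
        rintro ⟨p1, p2⟩
        by_cases hp : p1 * p2 = k
        · rw [if_pos hp, if_pos hp]
          by_cases h1 : u p1 = m - l
          · simp only [hβ'def, if_pos h1]
          · have : mx p2 = 0 := by
              by_contra hmxne
              have h2 := hmx_supp p2 hmxne
              have := hu p1 p2
              rw [hp, hk, h2] at this
              exact h1 (by linarith)
            simp [this]
        · rw [if_neg hp, if_neg hp]
      rw [this, ← hβeq]; rfl
    · have h1 : conv β' mx k = 0 := by
        apply conv_eq_zero
        rintro ⟨p1, p2⟩ hp
        by_cases hb : β' p1 = 0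
        · simp [hb]
        by_cases hm : mx p2 = 0
        · simp [hm]
        exfalso
        have e1 := hβ'supp p1 hb
        have e2 := hmx_supp p2 hm
        have := hu p1 p2
        rw [hp, e1, e2] at this
        exact hk (by linarith)
      rw [h1, minPart, if_neg hk]
  -- the new remainder
  set X2 : G → ℤ := fun t => x t - mx t with hX2def
  have hX2supp : ∀ t, X2 t ≠ 0 → x t ≠ 0 ∧ u t ≠ l := by
    intro t ht
    by_cases hl : u t = l
    · exfalso
      apply ht
      simp only [hX2def, hmxdef, minPart, ← hldef, if_pos hl]
      ring
    · refine ⟨?_, hl⟩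
      intro hxt
      apply ht
      simp only [hX2def, hmxdef, minPart, ← hldef, if_neg hl, hxt]
      ring
  have hrem : ∀ g, Rem x y (step u x y hdiv a) g =
      (r g - minPart u r g) - conv β' X2 g := by
    intro g
    have hsplit : conv (fun t => a t + β' t) x g = conv a x g + conv β' x g :=
      conv_add_left (convSet_finite_left ha x g) (convSet_finite_left hβ'fin x g)
    have hxeq : x = fun t => mx t + X2 t := by funext t; simp [hX2def]
    have hsplit2 : conv β' x g = conv β' mx g + conv β' X2 g := by
      calc conv β' x g = conv β' (fun t => mx t + X2 t) g := by rw [← hxeq]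
        _ = conv β' mx g + conv β' X2 g :=
          conv_add_right (convSet_finite_left hβ'fin mx g) (convSet_finite_left hβ'fin X2 g)
    have : Rem x y (step u x y hdiv a) g = y g - conv (fun t => a t + β' t) x g := by
      rw [hstep]; rfl
    rw [this, hsplit, hsplit2, hkey g]
    have : r g = y g - conv a x g := rfl
    rw [this]; ring
  refine ⟨?_, ?_, ?_⟩
  · intro g hg
    rw [hstep] at hg
    apply hβ'supp
    intro h0
    apply hg
    simp [h0]
  · rw [hstep]
    apply (ha.union hβ'fin).subset
    intro g hg
    simp only [Function.mem_support] at hg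
    by_cases h : a g = 0
    · exact Or.inr (by intro h0; apply hg; simp [h, h0])
    · exact Or.inl h
  · intro g hg
    rw [hrem g] at hg
    by_cases hc : conv β' X2 g = 0
    · rw [hc, sub_zero] at hg
      left
      by_cases hgm : u g = m
      · exfalso; apply hg; simp [minPart, hgm, ← hmdef]
      · refine ⟨?_, hgm⟩
        intro h0
        apply hg
        simp [minPart, if_neg hgm, h0, ← hmdef]
    · right
      obtain ⟨p, hpk, h1, h2⟩ := conv_ne_zero hc
      obtain ⟨hx2, hl2⟩ := hX2supp p.2 h2
      exact ⟨p, hpk, hβ'supp p.1 h1, hx2, hl2⟩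

end Main


/-- Division algorithm by increasing value of `u` in the Novikov ring: if the
`u`-minimal part of `x` divides (up to translation by elements of `G`, i.e. by a
finitely supported multiplier) the `u`-minimal part of every nonzero remainder
`y − αx`, then `x` divides `y` in `ℤ[G]_u`. -/
theorem stmt19 (G : Type*) [Group G]
    (u : G → ℝ) (hu : ∀ a b : G, u (a * b) = u a + u b)
    (x y : G → ℤ) (hx : NovCond u x) (hy : NovCond u y) (hx0 : x ≠ 0)
    (hdiv : ∀ α : G → ℤ, NovCond u α → (fun g => y g - conv α x g) ≠ 0 →
      ∃ β : G → ℤ, (Function.support β).Finite ∧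
        minPart u (fun g => y g - conv α x g) = conv β (minPart u x)) :
    ∃ α : G → ℤ, NovCond u α ∧ conv α x = y := by

  classical
  set l := minLevel u x with hldef
  have hl_le : ∀ g, x g ≠ 0 → l ≤ u g := fun g hg => minLevel_le hx hx0 hg
  have iter_fin : ∀ n, (Function.support (iter u x y hdiv n)).Finite := by
    intro n
    induction n with
    | zero =>
        apply Set.Finite.subset Set.finite_empty
        intro g hg
        simp only [Function.mem_support] at hg
        exact absurd rfl hg
    | succ n ih =>
        show (Function.support (step u x y hdiv (iter u x y hdiv n))).Finite
        by_cases h : (Function.support (iter u x y hdiv n)).Finite ∧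
            Rem x y (iter u x y hdiv n) ≠ 0
        · exact (step_spec u x y hdiv hu hx hy ih h.2).2.1
        · rw [step, dif_neg h]; exact ih
  have hrem_eq : ∀ n g, Rem x y (iter u x y hdiv n) g = y g - conv (iter u x y hdiv n) x g :=
    fun n g => rfl
  by_cases hfin : ∃ n, Rem x y (iter u x y hdiv n) = 0
  · obtain ⟨N, hN⟩ := hfin
    refine ⟨iter u x y hdiv N, nov_of_finite (iter_fin N), ?_⟩
    funext g
    have := congrFun hN g
    rw [hrem_eq] at this
    simp only [Pi.zero_apply] at this
    linarith [this]
  · push_neg at hfin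
    have hnovr : ∀ n, NovCond u (Rem x y (iter u x y hdiv n)) :=
      fun n => nov_sub hy (nov_conv hu (nov_of_finite (iter_fin n)) hx)
    set m : ℕ → ℝ := fun n => minLevel u (Rem x y (iter u x y hdiv n)) with hmdef
    have hm_att : ∀ n, ∃ g, Rem x y (iter u x y hdiv n) g ≠ 0 ∧ u g = m n ∧
        ∀ g', Rem x y (iter u x y hdiv n) g' ≠ 0 → m n ≤ u g' :=
      fun n => exists_min (hnovr n) (hfin n)
    -- level sets
    set A : Set ℝ := u '' Function.support y with hAdef
    set Lp : Set ℝ := {d | ∃ g, x g ≠ 0 ∧ u g ≠ l ∧ d = u g - l} with hLpdef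
    set M : Set ℝ := {t | ∃ a ∈ A, ∃ s ∈ AddSubmonoid.closure Lp, t = a + s} with hMdef
    have hrem0 : Rem x y (iter u x y hdiv 0) = y := by
      funext g
      rw [hrem_eq]
      have : conv (iter u x y hdiv 0) x = fun _ => 0 := conv_zero_left x
      rw [this]; ring
    -- the invariant
    have Hlev : ∀ n g, Rem x y (iter u x y hdiv n) g ≠ 0 → u g ∈ M := by
      intro n
      induction n with
      | zero =>
          intro g hg
          rw [hrem0] at hg
          exact ⟨u g, ⟨g, hg, rfl⟩, 0, zero_mem _, (add_zero _).symm⟩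
      | succ n ih =>
          intro g hg
          have hg' : Rem x y (step u x y hdiv (iter u x y hdiv n)) g ≠ 0 := hg
          rcases (step_spec u x y hdiv hu hx hy (iter_fin n) (hfin n)).2.2 g hg' with
            ⟨h1, -⟩ | ⟨p, hpk, hp1, hp2x, hp2l⟩
          · exact ih g h1
          · obtain ⟨g₀, hg₀, hg₀lev, -⟩ := hm_att n
            obtain ⟨a, haA, s, hs, hmn⟩ := ih g₀ hg₀
            refine ⟨a, haA, s + (u p.2 - l), ?_, ?_⟩
            · exact add_mem hs (AddSubmonoid.subset_closure ⟨p.2, hp2x, hp2l, rfl⟩)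
            · have := hu p.1 p.2
              rw [hpk] at this
              rw [hg₀lev] at hmn
              have hml : minLevel u (Rem x y (iter u x y hdiv n)) = a + s := hmn
              rw [this, hp1, hml, ← hldef]
              ring
    -- strict monotonicity of levels
    have hmono : StrictMono m := by
      apply strictMono_nat_of_lt_succ
      intro n
      obtain ⟨g₁, hg₁, hg₁lev, -⟩ := hm_att (n + 1)
      have hg₁' : Rem x y (step u x y hdiv (iter u x y hdiv n)) g₁ ≠ 0 := hg₁
      rw [← hg₁lev]
      rcases (step_spec u x y hdiv hu hx hy (iter_fin n) (hfin n)).2.2 g₁ hg₁' with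
        ⟨h1, h2⟩ | ⟨p, hpk, hp1, hp2x, hp2l⟩
      · obtain ⟨-, -, -, hmin⟩ := hm_att n
        exact lt_of_le_of_ne (hmin g₁ h1) (Ne.symm h2)
      · have := hu p.1 p.2
        rw [hpk, hp1] at this
        have h2 := hl_le p.2 hp2x
        have : u g₁ = m n + (u p.2 - l) := by linarith
        rw [this]
        have : l < u p.2 := lt_of_le_of_ne h2 (Ne.symm hp2l)
        linarith
    -- finiteness of M below any level
    have hy0 : y ≠ 0 := by rw [← hrem0]; exact hfin 0
    have hA_fin : ∀ C, (A ∩ Set.Iic C).Finite := by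
      intro C
      apply ((hy C).image u).subset
      rintro t ⟨⟨g, hg, rfl⟩, htC⟩
      exact ⟨g, ⟨hg, htC⟩, rfl⟩
    have hLp_fin : ∀ C, (Lp ∩ Set.Iic C).Finite := by
      intro C
      apply ((hx (C + l)).image (fun g => u g - l)).subset
      rintro t ⟨⟨g, hg1, hg2, rfl⟩, htC⟩
      simp only [Set.mem_Iic] at htC
      exact ⟨g, ⟨hg1, by linarith⟩, rfl⟩
    have hLp_pos : ∀ d ∈ Lp, 0 < d := by
      rintro d ⟨g, hg1, hg2, rfl⟩
      have := hl_le g hg1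
      have : l ≠ u g := fun h => hg2 h.symm
      have := hl_le g hg1
      cases lt_or_eq_of_le (hl_le g hg1) with
      | inl h => linarith
      | inr h => exact absurd h.symm hg2
    obtain ⟨δ, hδpos, hδle⟩ : ∃ δ : ℝ, 0 < δ ∧ ∀ d ∈ Lp, δ ≤ d := by
      by_cases hFne : (hLp_fin 1).toFinset.Nonempty
      · refine ⟨min 1 ((hLp_fin 1).toFinset.min' hFne), ?_, ?_⟩
        · apply lt_min one_pos
          have h1 := (hLp_fin 1).toFinset.min'_mem hFne
          rw [Set.Finite.mem_toFinset] at h1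
          exact hLp_pos _ h1.1
        · intro d hd
          by_cases hd1 : d ≤ 1
          · have h1 : d ∈ (hLp_fin 1).toFinset := by
              rw [Set.Finite.mem_toFinset]; exact ⟨hd, hd1⟩
            exact le_trans (min_le_right _ _) ((hLp_fin 1).toFinset.min'_le d h1)
          · push_neg at hd1
            exact le_trans (min_le_left _ _) hd1.le
      · refine ⟨1, one_pos, ?_⟩
        intro d hd
        by_contra h
        push_neg at h
        apply hFne
        exact ⟨d, by rw [Set.Finite.mem_toFinset]; exact ⟨hd, h.le⟩⟩
    have hclos_nn : ∀ s ∈ AddSubmonoid.closure Lp, (0:ℝ) ≤ s := by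
      intro s hs
      refine AddSubmonoid.closure_induction (motive := fun t _ => (0:ℝ) ≤ t)
        (fun d hd => (hLp_pos d hd).le) le_rfl (fun a b _ _ ha hb => add_nonneg ha hb) hs
    have hclos_fin : ∀ C : ℝ, ((AddSubmonoid.closure Lp : Set ℝ) ∩ Set.Iic C).Finite :=
      closure_inter_finite hδpos hδle hLp_fin
    -- lower bound for A
    obtain ⟨gy, hgy, hgylev, hgymin⟩ := exists_min hy hy0
    have hA_lb : ∀ a ∈ A, minLevel u y ≤ a := by
      rintro a ⟨g, hg, rfl⟩
      exact hgymin g hg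
    have hM_fin : ∀ C : ℝ, (M ∩ Set.Iic C).Finite := by
      intro C
      apply (Set.Finite.image2 (· + ·) (hA_fin C) (hclos_fin (C - minLevel u y))).subset
      rintro t ⟨⟨a, haA, s, hs, rfl⟩, htC⟩
      simp only [Set.mem_Iic] at htC
      have h1 := hclos_nn s hs
      have h2 := hA_lb a haA
      exact Set.mem_image2_of_mem ⟨haA, by simp only [Set.mem_Iic]; linarith⟩
        ⟨hs, by simp only [Set.mem_Iic]; linarith⟩
    have hmM : ∀ n, m n ∈ M := by
      intro n
      obtain ⟨g₀, hg₀, hg₀lev, -⟩ := hm_att n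
      exact hg₀lev ▸ Hlev n g₀ hg₀
    have hmgt : ∀ C : ℝ, ∃ N, C < m N := by
      intro C
      by_contra h
      push_neg at h
      have : Set.range m ⊆ M ∩ Set.Iic C := by
        rintro t ⟨n, rfl⟩
        exact ⟨hmM n, Set.mem_Iic.mpr (h n)⟩
      have hrfin : (Set.range m).Finite := (hM_fin C).subset this
      have : (Set.range m).Infinite := Set.infinite_range_of_injective hmono.injective
      exact this hrfin
    have hmge : ∀ {N n}, N ≤ n → m N ≤ m n := fun h => hmono.monotone h
    -- the limit series
    set α : G → ℤ := fun g => ∑ᶠ n, (iter u x y hdiv (n+1) g - iter u x y hdiv n g)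
      with hαdef
    have hd_supp : ∀ n g, iter u x y hdiv (n+1) g - iter u x y hdiv n g ≠ 0 →
        u g = m n - l := by
      intro n g hg
      have : iter u x y hdiv (n+1) g ≠ iter u x y hdiv n g := fun h => hg (by rw [h]; ring)
      exact (step_spec u x y hdiv hu hx hy (iter_fin n) (hfin n)).1 g this
    have hd_fin : ∀ n, (Function.support
        (fun g => iter u x y hdiv (n+1) g - iter u x y hdiv n g)).Finite := by
      intro n
      apply ((iter_fin (n+1)).union (iter_fin n)).subset
      intro g hg
      simp only [Function.mem_support] at hg
      by_cases h : iter u x y hdiv (n+1) g = 0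
      · refine Or.inr (fun h0 => hg ?_)
        have h0' : iter u x y hdiv n g = 0 := h0
        rw [h, h0']; ring
      · exact Or.inl h
    have halpha : ∀ (g : G) (N : ℕ),
        (∀ n, N ≤ n → iter u x y hdiv (n+1) g = iter u x y hdiv n g) →
        α g = iter u x y hdiv N g := by
      intro g N hstab
      have hsupp : (Function.support
          (fun n => iter u x y hdiv (n+1) g - iter u x y hdiv n g)) ⊆
            ↑(Finset.range N) := by
        intro n hn
        simp only [Function.mem_support] at hn
        simp only [Finset.coe_range, Set.mem_Iio]
        by_contra h
        push_neg at h
        exact hn (by rw [hstab n h]; ring)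
      show (∑ᶠ (n : ℕ), (iter u x y hdiv (n+1) g - iter u x y hdiv n g)) =
        iter u x y hdiv N g
      rw [finsum_eq_sum_of_support_subset _ hsupp]
      rw [Finset.sum_range_sub (f := fun n => iter u x y hdiv n g)]
      have : iter u x y hdiv 0 g = 0 := rfl
      rw [this]; ring
    have hvanish : ∀ (g : G) (N : ℕ), u g < m N - l →
        (∀ n, N ≤ n → iter u x y hdiv (n+1) g = iter u x y hdiv n g) := by
      intro g N hg n hn
      by_contra h
      have hne : iter u x y hdiv (n+1) g - iter u x y hdiv n g ≠ 0 := fun h0 => h (by omega)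
      have := hd_supp n g hne
      have := hmge hn
      linarith [this]
    have hανov : NovCond u α := by
      intro C
      have hSfin : {n : ℕ | m n ≤ C + l}.Finite := by
        by_contra hinf
        obtain ⟨N, hCN⟩ := hmgt (C + l)
        apply hinf
        apply (Set.finite_Iio N).subset
        intro n hn
        simp only [Set.mem_Iio]
        by_contra h
        push_neg at h
        have := hmge h
        simp only [Set.mem_setOf_eq] at hn
        linarith
      apply (Set.Finite.biUnion hSfin (fun n _ => hd_fin n)).subset
      rintro g ⟨hg, hgC⟩
      have hex : ∃ n, iter u x y hdiv (n+1) g - iter u x y hdiv n g ≠ 0 := by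
        by_contra h
        push_neg at h
        apply hg
        have : α g = iter u x y hdiv 0 g :=
          halpha g 0 (fun n _ => by have := h n; omega)
        rw [this]; rfl
      obtain ⟨n, hn⟩ := hex
      have hlev := hd_supp n g hn
      refine Set.mem_biUnion ?_ hn
      simp only [Set.mem_setOf_eq]
      linarith [hlev ▸ hgC]
    refine ⟨α, hανov, ?_⟩
    funext k
    obtain ⟨N, hN⟩ := hmgt (u k)
    set ρ : G → ℤ := fun g => α g - iter u x y hdiv N g with hρdef
    have hρsupp : ∀ g, ρ g ≠ 0 → m N - l ≤ u g := by
      intro g hg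
      by_contra h
      push_neg at h
      apply hg
      rw [hρdef]
      simp only [halpha g N (hvanish g N h), sub_self]
    have hρnov : NovCond u ρ := nov_sub hανov (nov_of_finite (iter_fin N))
    have hαsplit : conv α x k = conv (iter u x y hdiv N) x k + conv ρ x k := by
      have : α = fun g => iter u x y hdiv N g + ρ g := by
        funext g; rw [hρdef]; ring
      calc conv α x k = conv (fun g => iter u x y hdiv N g + ρ g) x k := by rw [← this]
        _ = conv (iter u x y hdiv N) x k + conv ρ x k :=
          conv_add_left (convSet_finite_left (iter_fin N) x k)
            (convSet_finite_nov hu hρnov hx k)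
    have hρzero : conv ρ x k = 0 := by
      apply conv_eq_zero
      rintro ⟨p1, p2⟩ hp
      by_cases h1 : ρ p1 = 0
      · simp [h1]
      by_cases h2 : x p2 = 0
      · simp [h2]
      exfalso
      have e1 := hρsupp p1 h1
      have e2 := hl_le p2 h2
      have := hu p1 p2
      rw [hp] at this
      linarith
    have hremN : Rem x y (iter u x y hdiv N) k = 0 := by
      by_contra h
      obtain ⟨-, -, -, hmin⟩ := hm_att N
      have := hmin k h
      linarith
    rw [hrem_eq] at hremN
    rw [hαsplit, hρzero]
    omega
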